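/- Let g : ℂ → ℂ be holomorphic on ℂ \ {0} and let λ ∈ ℂ with λ ≠ 0 and |λ| ≠ 1. If λ · g(λz) = g(z) for all z ≠ 0 (i.e., the holomorphic 1-form ω = g(z)dz on ℂ \ {0} is invariant under the hyperbolic linear map f(z) = λz), then g(z) = g(1)/z for every z ≠ 0; equivalently, ω is a constant multiple of dz/z. -/

import Mathlib

open Complex Set Bornology


/-- If `g` is holomorphic on `ℂ \ {0}` and the 1-form `g(z) dz` is invariant under the
hyperbolic linear map `z ↦ λ z` (i.e. `λ g(λ z) = g z`), with `λ ≠ 0` and `|λ| ≠ 1`,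
then `g z = g 1 / z` for every `z ≠ 0`. -/
theorem stmt_0 (g : ℂ → ℂ) (lam : ℂ)
    (hg : DifferentiableOn ℂ g {(0 : ℂ)}ᶜ)
    (hlam0 : lam ≠ 0) (hlam1 : ‖lam‖ ≠ 1)
    (hinv : ∀ z : ℂ, z ≠ 0 → lam * g (lam * z) = g z) :
    ∀ z : ℂ, z ≠ 0 → g z = g 1 / z := by
  set μ : ℂ := Complex.log lam with hμdef
  have hexpμ : Complex.exp μ = lam := Complex.exp_log hlam0
  have hμre : μ.re ≠ 0 := by
    rw [hμdef, Complex.log_re]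
    intro h
    rcases Real.log_eq_zero.mp h with h | h | h
    · exact (norm_ne_zero_iff.mpr hlam0) h
    · exact hlam1 h
    · linarith [norm_nonneg lam]
  set F : ℂ → ℂ := fun z => Complex.exp z * g (Complex.exp z) with hFdef
  have hgd : ∀ w : ℂ, w ≠ 0 → DifferentiableAt ℂ g w := fun w hw =>
    hg.differentiableAt (isOpen_compl_singleton.mem_nhds hw)
  have hFdiff : Differentiable ℂ F := fun z =>
    (Complex.differentiable_exp z).mul
      (((hgd _ (Complex.exp_ne_zero z)).comp z (Complex.differentiable_exp z)))
  have hper1 : Function.Periodic F μ := by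
    intro z
    simp only [hFdef, Complex.exp_add, hexpμ]
    rw [mul_comm (Complex.exp z) lam]
    linear_combination Complex.exp z * hinv (Complex.exp z) (Complex.exp_ne_zero z)
  have hper2 : Function.Periodic F (2 * Real.pi * I) := fun z => by
    simp only [hFdef, Complex.exp_periodic z]
  set c : ℂ := 2 * Real.pi * I with hcdef
  have hc_re : c.re = 0 := by simp [hcdef]
  have hc_im : c.im = 2 * Real.pi := by simp [hcdef]
  set K : Set ℂ := (fun p : ℝ × ℝ => (p.1 : ℂ) * μ + (p.2 : ℂ) * c) ''
      (Icc 0 1 ×ˢ Icc 0 1) with hKdef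
  have hK : IsCompact K := (isCompact_Icc.prod isCompact_Icc).image (by fun_prop)
  have hsub : range F ⊆ F '' K := by
    rintro - ⟨z, rfl⟩
    set a : ℝ := z.re / μ.re with ha
    set b : ℝ := (z.im - a * μ.im) / (2 * Real.pi) with hb
    have hπ : (2 : ℝ) * Real.pi ≠ 0 := by positivity
    have hz : z = (a : ℂ) * μ + (b : ℂ) * c := by
      apply Complex.ext
      · simp only [Complex.add_re, Complex.mul_re, Complex.ofReal_re, Complex.ofReal_im,
          hc_re, hc_im]
        rw [ha]
        field_simp
        ring
      · simp only [Complex.add_im, Complex.mul_im, Complex.ofReal_re, Complex.ofReal_im,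
          hc_re, hc_im]
        rw [hb]
        field_simp
        ring
    refine ⟨((Int.fract a : ℝ) : ℂ) * μ + ((Int.fract b : ℝ) : ℂ) * c,
      ⟨(Int.fract a, Int.fract b), ⟨⟨Int.fract_nonneg a, (Int.fract_lt_one a).le⟩,
        ⟨Int.fract_nonneg b, (Int.fract_lt_one b).le⟩⟩, rfl⟩, ?_⟩
    have h1 := (hper1.zsmul ⌊a⌋) (((Int.fract a : ℝ) : ℂ) * μ + ((Int.fract b : ℝ) : ℂ) * c)
    have h2 := (hper2.zsmul ⌊b⌋)
      (((Int.fract a : ℝ) : ℂ) * μ + ((Int.fract b : ℝ) : ℂ) * c + ⌊a⌋ • μ)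
    have hzz : z = ((Int.fract a : ℝ) : ℂ) * μ + ((Int.fract b : ℝ) : ℂ) * c
        + ⌊a⌋ • μ + ⌊b⌋ • c := by
      rw [hz]
      push_cast [Int.fract, zsmul_eq_mul]
      ring
    rw [hzz, ← hcdef] at *
    rw [h2, h1]
  have hbd : IsBounded (range F) := ((hK.image hFdiff.continuous).isBounded).subset hsub
  have hconst : ∀ z : ℂ, F z = F 0 := fun z => hFdiff.apply_eq_apply_of_bounded hbd z 0
  intro z hz
  have h1 : z * g z = g 1 := by
    have := hconst (Complex.log z)
    simpa [hFdef, Complex.exp_log hz] using this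
  rw [eq_div_iff hz, mul_comm]
  exact h1
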